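/- Let h be a d-dimensional complex vector space with a nondegenerate symmetric ℂ-bilinear form ⟨·,·⟩, let ℓ be a nonzero rational number, and let K be the additive subgroup of h generated by a ℤ-basis {α_1, …, α_d} that is also a ℂ-basis of h (so K is a full-rank lattice spanning h over ℂ); assume ℓ⟨α, β⟩ ∈ ℤ for all α, β ∈ K. Define the dual K^o = { x ∈ h : ⟨α, x⟩ ∈ ℤ for all α ∈ K }. Then the kernel of the ℂ/2ℤ-valued ℤ-bilinear form on K^o defined by (x, y) = ⟨x, y⟩/ℓ + 2ℤ equals 2ℓK; that is, for x ∈ K^o one has (⟨x, y⟩/ℓ ∈ 2ℤ for all y ∈ K^o) if and only if x = 2ℓα for some α ∈ K. -/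

import Mathlib

/-- Let `h` be a `d`-dimensional complex vector space with a nondegenerate
symmetric ℂ-bilinear form `B = ⟨·,·⟩`, `ℓ` a nonzero rational number, and `K` the
additive subgroup of `h` generated by a ℤ-basis `α_1, …, α_d` which is also a ℂ-basis of
`h`; assume `ℓ⟨α,β⟩ ∈ ℤ` for all `α, β ∈ K`.  With `K^o = {x : ⟨a,x⟩ ∈ ℤ for all a ∈ K}`,
the kernel of the `ℂ/2ℤ`-valued ℤ-bilinear form `(x,y) = ⟨x,y⟩/ℓ + 2ℤ` on `K^o` equals
`2ℓK`: for `x ∈ K^o`, `(⟨x,y⟩/ℓ ∈ 2ℤ for all y ∈ K^o)` iff `x = 2ℓa` for some `a ∈ K`. -/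
theorem kernel_of_dual_form_eq_two_ell_K
    (d : ℕ) (h : Type) [AddCommGroup h] [Module ℂ h]
    (B : h → h → ℂ)
    (hBaddL : ∀ x y z : h, B (x + y) z = B x z + B y z)
    (hBsmulL : ∀ (c : ℂ) (x y : h), B (c • x) y = c * B x y)
    (hBaddR : ∀ x y z : h, B x (y + z) = B x y + B x z)
    (hBsmulR : ∀ (c : ℂ) (x y : h), B x (c • y) = c * B x y)
    (hBsymm : ∀ x y : h, B x y = B y x)
    (hBnd : ∀ x : h, (∀ y : h, B x y = 0) → x = 0)
    (ℓ : ℚ) (hℓ : ℓ ≠ 0)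
    (α : Fin d → h) (hbasis : ∃ b : Module.Basis (Fin d) ℂ h, ⇑b = α)
    (K : AddSubgroup h) (hK : K = AddSubgroup.closure (Set.range α))
    (hInt : ∀ x ∈ K, ∀ y ∈ K, ∃ n : ℤ, (ℓ : ℂ) * B x y = (n : ℂ))
    (Ko : Set h) (hKo : Ko = {x : h | ∀ a ∈ K, ∃ n : ℤ, B a x = (n : ℂ)}) :
    ∀ x ∈ Ko, ((∀ y ∈ Ko, ∃ m : ℤ, B x y / (ℓ : ℂ) = 2 * (m : ℂ))
      ↔ ∃ a ∈ K, x = ((2 * ℓ : ℚ) : ℂ) • a) := by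
  obtain ⟨b, hb⟩ := hbasis
  haveI : FiniteDimensional ℂ h := Module.Finite.of_basis b
  have hℓC : (ℓ : ℂ) ≠ 0 := by exact_mod_cast Rat.cast_ne_zero.mpr hℓ
  have hB0L : ∀ y : h, B 0 y = 0 := by
    intro y
    have := hBsmulL 0 0 y
    simpa using this
  have hBnegL : ∀ a y : h, B (-a) y = -B a y := by
    intro a y
    have := hBsmulL (-1) a y
    simpa using this
  -- linear map in the first variable (with second fixed)
  let L : h → h →ₗ[ℂ] ℂ := fun y =>
    { toFun := fun x => B x y
      map_add' := fun x z => hBaddL x z y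
      map_smul' := fun c x => hBsmulL c x y }
  -- the coordinate map x ↦ (B (α i) x)_i
  let φ : h →ₗ[ℂ] (Fin d → ℂ) :=
    { toFun := fun x i => B (α i) x
      map_add' := by intro x z; funext i; exact hBaddR (α i) x z
      map_smul' := by intro c x; funext i; simpa using hBsmulR c (α i) x }
  have hφinj : Function.Injective φ := by
    rw [← LinearMap.ker_eq_bot, LinearMap.ker_eq_bot']
    intro x hx
    have hx' : ∀ i, B (α i) x = 0 := fun i => congrFun hx i
    apply hBnd
    intro y
    rw [hBsymm]
    have : B y x = L x y := rfl
    rw [this, ← b.sum_repr y, map_sum]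
    refine Finset.sum_eq_zero fun i _ => ?_
    have : L x (b.repr y i • b i) = b.repr y i * B (b i) x := by
      rw [map_smul]; rfl
    rw [this, hb, hx' i, mul_zero]
  have hfr : Module.finrank ℂ h = Module.finrank ℂ (Fin d → ℂ) := by
    rw [Module.finrank_eq_card_basis b, Module.finrank_fin_fun]
    simp
  let e := φ.linearEquivOfInjective hφinj hfr
  have he : ∀ x, e x = φ x := fun x => LinearMap.linearEquivOfInjective_apply hφinj hfr x
  let β : Fin d → h := fun j => e.symm (Pi.single j 1)
  have hβ : ∀ i j, B (α i) (β j) = (Pi.single j (1 : ℂ) : Fin d → ℂ) i := by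
    intro i j
    have : φ (β j) = (Pi.single j (1 : ℂ) : Fin d → ℂ) := by
      rw [← he, LinearEquiv.apply_symm_apply]
    exact congrFun this i
  have hβK : ∀ j, ∀ a ∈ K, ∃ n : ℤ, B a (β j) = (n : ℂ) := by
    intro j a ha
    rw [hK] at ha
    induction ha using AddSubgroup.closure_induction with
    | mem z hz =>
      obtain ⟨i, rfl⟩ := hz
      refine ⟨if i = j then 1 else 0, ?_⟩
      rw [hβ, Pi.single_apply]
      split <;> simp
    | zero => exact ⟨0, by simp [hB0L]⟩
    | add x y hx hy ihx ihy =>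
      obtain ⟨n, hn⟩ := ihx
      obtain ⟨m, hm⟩ := ihy
      exact ⟨n + m, by rw [hBaddL, hn, hm]; push_cast; ring⟩
    | neg x hx ihx =>
      obtain ⟨n, hn⟩ := ihx
      exact ⟨-n, by rw [hBnegL, hn]; push_cast; ring⟩
  intro x _hx
  constructor
  · intro hall
    have hrepr : ∀ j, B x (β j) = b.repr x j := by
      intro j
      have h1 : B x (β j) = L (β j) x := rfl
      rw [h1, ← b.sum_repr x, map_sum]
      have h2 : ∀ i, L (β j) (b.repr x i • b i) = b.repr x i * B (α i) (β j) := by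
        intro i; rw [map_smul, hb]; rfl
      simp only [h2, hβ, Pi.single_apply, mul_ite, mul_one, mul_zero]
      simp
    choose m hm using fun j => hall (β j) (by rw [hKo]; exact hβK j)
    have hc : ∀ j, b.repr x j = ((2 * ℓ : ℚ) : ℂ) * (m j : ℂ) := by
      intro j
      have h1 := hm j
      rw [hrepr, div_eq_iff hℓC] at h1
      rw [h1]; push_cast; ring
    refine ⟨∑ j, m j • α j, ?_, ?_⟩
    · rw [hK]
      exact AddSubgroup.sum_mem _ fun j _ =>
        AddSubgroup.zsmul_mem _ (AddSubgroup.subset_closure (Set.mem_range_self j)) _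
    · conv_lhs => rw [← b.sum_repr x]
      rw [Finset.smul_sum]
      refine Finset.sum_congr rfl fun j _ => ?_
      rw [hb, hc j, ← Int.cast_smul_eq_zsmul ℂ (m j) (α j), smul_smul]
  · rintro ⟨a, haK, rfl⟩ y hy
    rw [hKo] at hy
    obtain ⟨n, hn⟩ := hy a haK
    refine ⟨n, ?_⟩
    rw [hBsmulL, hn]
    push_cast
    field_simp
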